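/- For the Berwald–Moór metric of momenta the following hold for p in the positive orthant: a^i = K/(n·p_i) for every i; a^{ij} = (n/(n−1))·a^i a^j for i ≠ j and a^{ii} = 0; and the matrix (a_{ij}) defined by a_{ij} = n·a_i a_j for i ≠ j and a_{ii} = −n(n−2)·a_i² is the inverse of the matrix (a^{ij}), i.e. ∑_s a_{is}·a^{sj} = δ_i^j for all i, j. -/

import Mathlib

open Finset

noncomputable section

/-- The Berwald–Moór coefficients: `a^{i₁…i_n} = 1/n!` if the indices are pairwise
distinct and `0` otherwise, with `n = N + 4`. -/
def BMc (N : ℕ) : (Fin (N + 4) → Fin (N + 4)) → ℝ :=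
  fun ι => if Function.Injective ι then ((N + 4).factorial : ℝ)⁻¹ else 0

/-- `A(p) = ∑ a^{i₁…i_n} p_{i₁}⋯p_{i_n}`. -/
def Afun (N : ℕ) (p : Fin (N + 4) → ℝ) : ℝ :=
  ∑ ι : Fin (N + 4) → Fin (N + 4), BMc N ι * ∏ t, p (ι t)

/-- `K(p) = A(p)^{1/n}`, the Berwald–Moór metric of momenta. -/
def Kfun (N : ℕ) (p : Fin (N + 4) → ℝ) : ℝ :=
  Afun N p ^ ((1 : ℝ) / (N + 4))

/-- `a^i = (∑ a^{i i₂…i_n} p_{i₂}⋯p_{i_n}) / K^{n-1}`. -/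
def aU1 (N : ℕ) (i : Fin (N + 4)) (p : Fin (N + 4) → ℝ) : ℝ :=
  (∑ ι : Fin (N + 3) → Fin (N + 4), BMc N (Fin.cons i ι) * ∏ t, p (ι t)) / Kfun N p ^ (N + 3)

/-- `a^{ij} = (∑ a^{i j i₃…i_n} p_{i₃}⋯p_{i_n}) / K^{n-2}`. -/
def aU2 (N : ℕ) (i j : Fin (N + 4)) (p : Fin (N + 4) → ℝ) : ℝ :=
  (∑ ι : Fin (N + 2) → Fin (N + 4), BMc N (Fin.cons i (Fin.cons j ι)) * ∏ t, p (ι t)) /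
    Kfun N p ^ (N + 2)

/-- `a^{ijk} = (∑ a^{i j k i₄…i_n} p_{i₄}⋯p_{i_n}) / K^{n-3}`. -/
def aU3 (N : ℕ) (i j k : Fin (N + 4)) (p : Fin (N + 4) → ℝ) : ℝ :=
  (∑ ι : Fin (N + 1) → Fin (N + 4), BMc N (Fin.cons i (Fin.cons j (Fin.cons k ι))) *
    ∏ t, p (ι t)) / Kfun N p ^ (N + 1)

/-- The matrix `a_{ij}`: `a_{ij} = n a_i a_j` for `i ≠ j` and `a_{ii} = -n(n-2) a_i²`,
where `a_i = p_i/K`. -/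
def aLowBM (N : ℕ) (p : Fin (N + 4) → ℝ) (i j : Fin (N + 4)) : ℝ :=
  if i = j then -((N + 4 : ℝ) * (N + 2)) * (p i / Kfun N p) ^ 2
  else (N + 4 : ℝ) * (p i / Kfun N p) * (p j / Kfun N p)

/-- `g_{ij} = (1/(n-1)) a_{ij} + ((n-2)/(n-1)) a_i a_j`. -/
def gLowBM (N : ℕ) (p : Fin (N + 4) → ℝ) (i j : Fin (N + 4)) : ℝ :=
  (1 / (N + 3 : ℝ)) * aLowBM N p i j +
    ((N + 2 : ℝ) / (N + 3)) * (p i / Kfun N p) * (p j / Kfun N p)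

/-- Partial derivative `∂f/∂p_k` of a function of `p`. -/
def pd {n : ℕ} (f : (Fin n → ℝ) → ℝ) (k : Fin n) (p : Fin n → ℝ) : ℝ :=
  deriv (fun t => f (Function.update p k t)) (p k)

/-- Fundamental metrical d-tensor `g^{ij} = (1/2) ∂²(K²)/∂p_i∂p_j`. -/
def gU (N : ℕ) (i j : Fin (N + 4)) (p : Fin (N + 4) → ℝ) : ℝ :=
  (1 / 2 : ℝ) * pd (fun q => pd (fun r => Kfun N r ^ 2) j q) i p

/-- Angular metrical d-tensor `h^{ij} = K ∂²K/∂p_i∂p_j`. -/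
def hU (N : ℕ) (i j : Fin (N + 4)) (p : Fin (N + 4) → ℝ) : ℝ :=
  Kfun N p * pd (fun q => pd (Kfun N) j q) i p

/-- v-torsion d-tensor `C^{ijk} = -(1/2) ∂g^{ij}/∂p_k`. -/
def CU (N : ℕ) (i j k : Fin (N + 4)) (p : Fin (N + 4) → ℝ) : ℝ :=
  -(1 / 2 : ℝ) * pd (gU N i j) k p

/-- v-derivation components `C_i^{jk} = ∑_s g_{is} C^{sjk}`. -/
def CL (N : ℕ) (p : Fin (N + 4) → ℝ) (i j k : Fin (N + 4)) : ℝ :=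
  ∑ s, gLowBM N p i s * CU N s j k p

open Function in
lemma key (n : ℕ) (p : Fin n → ℝ) :
    ∀ (m : ℕ) (s : Finset (Fin n)), sᶜ.card = m →
    ∑ ι : Fin m → Fin n, (if Function.Injective ι ∧ ∀ t, ι t ∉ s then ∏ t, p (ι t) else 0)
      = m.factorial * ∏ x ∈ sᶜ, p x := by
  intro m
  induction m with
  | zero =>
    intro s hs
    rw [Finset.card_eq_zero] at hs
    rw [hs]
    simp [Function.injective_of_subsingleton]
  | succ m ih =>
    intro s hs
    rw [← Equiv.sum_comp (Fin.consEquiv (fun _ => Fin n)), Fintype.sum_prod_type]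
    have step : ∀ x : Fin n, (∑ ι : Fin m → Fin n,
        if Function.Injective (Fin.cons x ι : Fin (m+1) → Fin n) ∧ ∀ t, (Fin.cons x ι : Fin (m+1) → Fin n) t ∉ s then
          ∏ t, p ((Fin.cons x ι : Fin (m+1) → Fin n) t) else 0)
        = if x ∈ sᶜ then p x * (m.factorial * ∏ y ∈ (insert x s)ᶜ, p y) else 0 := by
      intro x
      by_cases hx : x ∈ s
      · simp only [mem_compl, hx, not_true, if_false]
        apply Finset.sum_eq_zero
        intro ι _
        rw [if_neg]
        rintro ⟨-, h2⟩
        exact (h2 0) (by simpa using hx)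
      · rw [if_pos (by simpa using hx)]
        have hc : (insert x s)ᶜ.card = m := by
          rw [Finset.compl_insert, Finset.card_erase_of_mem (by simpa using hx)]
          omega
        rw [← ih _ hc, Finset.mul_sum]
        apply Finset.sum_congr rfl
        intro ι _
        have hcond : (Function.Injective (Fin.cons x ι : Fin (m+1) → Fin n) ∧ ∀ t, (Fin.cons x ι : Fin (m+1) → Fin n) t ∉ s) ↔
            (Function.Injective ι ∧ ∀ t, ι t ∉ insert x s) := by
          rw [Fin.cons_injective_iff]
          constructor
          · rintro ⟨⟨hr, hinj⟩, hall⟩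
            refine ⟨hinj, fun t => ?_⟩
            simp only [Finset.mem_insert]
            rintro (h | h)
            · exact hr ⟨t, h⟩
            · exact hall t.succ (by simpa using h)
          · rintro ⟨hinj, hall⟩
            refine ⟨⟨?_, hinj⟩, ?_⟩
            · rintro ⟨t, ht⟩
              exact hall t (by simp [ht])
            · intro t
              refine Fin.cases ?_ ?_ t
              · simpa using hx
              · intro t'
                simp only [Fin.cons_succ]
                exact fun h => hall t' (Finset.mem_insert_of_mem h)
        rw [Fin.prod_univ_succ]
        simp only [Fin.cons_zero, Fin.cons_succ, hcond]
        split
        · ring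
        · ring
    simp only [Fin.consEquiv, Equiv.coe_fn_mk]
    erw [Finset.sum_congr rfl (fun x _ => step x)]
    rw [Finset.sum_ite_mem, Finset.univ_inter]
    have : ∀ x ∈ sᶜ, p x * (m.factorial * ∏ y ∈ (insert x s)ᶜ, p y)
        = m.factorial * ∏ y ∈ sᶜ, p y := by
      intro x hx
      rw [Finset.compl_insert]
      rw [← mul_assoc, mul_comm (p x) _, mul_assoc, Finset.mul_prod_erase _ _ hx]
    rw [Finset.sum_congr rfl this, Finset.sum_const, hs, nsmul_eq_mul]
    push_cast [Nat.factorial_succ]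
    ring

lemma Afun_eq (N : ℕ) (p : Fin (N + 4) → ℝ) : Afun N p = ∏ x, p x := by
  have h := key (N + 4) p (N + 4) ∅ (by simp)
  have h2 : Afun N p = ((N + 4).factorial : ℝ)⁻¹ *
      ∑ ι : Fin (N + 4) → Fin (N + 4),
        (if Function.Injective ι ∧ ∀ t, ι t ∉ (∅ : Finset (Fin (N + 4))) then ∏ t, p (ι t) else 0) := by
    rw [Finset.mul_sum]
    apply Finset.sum_congr rfl
    intro ι _
    unfold BMc
    by_cases hι : Function.Injective ι <;> simp [hι]
  rw [h2, h, Finset.compl_empty]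
  rw [← mul_assoc, inv_mul_cancel₀ (by positivity), one_mul]

lemma num1_eq (N : ℕ) (i : Fin (N + 4)) (p : Fin (N + 4) → ℝ) :
    (∑ ι : Fin (N + 3) → Fin (N + 4), BMc N (Fin.cons i ι) * ∏ t, p (ι t)) =
      ((N + 4).factorial : ℝ)⁻¹ * ((N + 3).factorial * ∏ x ∈ ({i} : Finset (Fin (N + 4)))ᶜ, p x) := by
  have h := key (N + 4) p (N + 3) {i} (by simp [Finset.card_compl])
  rw [← h, Finset.mul_sum]
  apply Finset.sum_congr rfl
  intro ι _
  unfold BMc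
  have hiff : Function.Injective (Fin.cons i ι : Fin (N + 4) → Fin (N + 4)) ↔
      (Function.Injective ι ∧ ∀ t, ι t ∉ ({i} : Finset (Fin (N + 4)))) := by
    rw [Fin.cons_injective_iff]
    simp only [Set.mem_range, not_exists, Finset.mem_singleton]
    constructor
    · rintro ⟨h1, h2⟩; exact ⟨h2, fun t ht => h1 t ht⟩
    · rintro ⟨h1, h2⟩; exact ⟨fun t ht => h2 t ht, h1⟩
  simp only [hiff]
  split <;> simp

lemma cons2_injective_iff {N : ℕ} (i j : Fin (N + 4)) (ι : Fin (N + 2) → Fin (N + 4)) :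
    Function.Injective (Fin.cons i (Fin.cons j ι) : Fin (N + 4) → Fin (N + 4)) ↔
      (i ≠ j ∧ Function.Injective ι ∧ ∀ t, ι t ∉ ({i, j} : Finset (Fin (N + 4)))) := by
  rw [Fin.cons_injective_iff, Fin.cons_injective_iff, Fin.range_cons]
  simp only [Set.mem_insert_iff, Set.mem_range, not_or, not_exists,
    Finset.mem_insert, Finset.mem_singleton, ne_eq]
  constructor
  · rintro ⟨⟨hij, hi⟩, hj, hinj⟩
    exact ⟨hij, hinj, fun t => ⟨hi t, hj t⟩⟩
  · rintro ⟨hij, hinj, h⟩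
    exact ⟨⟨hij, fun t => (h t).1⟩, fun t => (h t).2, hinj⟩

lemma num2_eq (N : ℕ) (i j : Fin (N + 4)) (hij : i ≠ j) (p : Fin (N + 4) → ℝ) :
    (∑ ι : Fin (N + 2) → Fin (N + 4), BMc N (Fin.cons i (Fin.cons j ι)) * ∏ t, p (ι t)) =
      ((N + 4).factorial : ℝ)⁻¹ *
        ((N + 2).factorial * ∏ x ∈ ({i, j} : Finset (Fin (N + 4)))ᶜ, p x) := by
  have hc : (({i, j} : Finset (Fin (N + 4)))ᶜ).card = N + 2 := by
    rw [Finset.card_compl, Finset.card_insert_of_notMem (by simpa using hij)]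
    simp
  have h := key (N + 4) p (N + 2) {i, j} hc
  rw [← h, Finset.mul_sum]
  apply Finset.sum_congr rfl
  intro ι _
  unfold BMc
  have hiff : Function.Injective (Fin.cons i (Fin.cons j ι) : Fin (N + 4) → Fin (N + 4)) ↔
      (Function.Injective ι ∧ ∀ t, ι t ∉ ({i, j} : Finset (Fin (N + 4)))) := by
    rw [cons2_injective_iff]
    simp [hij]
  simp only [hiff]
  split <;> simp

lemma num2_diag (N : ℕ) (i : Fin (N + 4)) (p : Fin (N + 4) → ℝ) :
    (∑ ι : Fin (N + 2) → Fin (N + 4), BMc N (Fin.cons i (Fin.cons i ι)) * ∏ t, p (ι t)) = 0 := by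
  apply Finset.sum_eq_zero
  intro ι _
  unfold BMc
  rw [if_neg, zero_mul]
  rw [cons2_injective_iff]
  rintro ⟨h, -⟩
  exact h rfl


lemma prod_compl_singleton' {N : ℕ} (p : Fin (N + 4) → ℝ) (i : Fin (N + 4)) (hpi : p i ≠ 0) :
    ∏ x ∈ ({i} : Finset (Fin (N + 4)))ᶜ, p x = (∏ x, p x) / p i := by
  rw [Finset.compl_singleton, eq_div_iff hpi, mul_comm]
  exact Finset.mul_prod_erase _ _ (Finset.mem_univ i)

lemma prod_compl_pair' {N : ℕ} (p : Fin (N + 4) → ℝ) (i j : Fin (N + 4)) (hij : i ≠ j)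
    (hpi : p i ≠ 0) (hpj : p j ≠ 0) :
    ∏ x ∈ ({i, j} : Finset (Fin (N + 4)))ᶜ, p x = (∏ x, p x) / (p i * p j) := by
  rw [show ({i, j} : Finset (Fin (N + 4)))ᶜ = ((Finset.univ.erase j).erase i) by
    rw [Finset.compl_insert, Finset.compl_singleton]]
  rw [eq_div_iff (mul_ne_zero hpi hpj)]
  have h1 : p i * ∏ x ∈ (Finset.univ.erase j).erase i, p x = ∏ x ∈ Finset.univ.erase j, p x :=
    Finset.mul_prod_erase _ _ (Finset.mem_erase.mpr ⟨hij, Finset.mem_univ i⟩)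
  have h2 : p j * ∏ x ∈ Finset.univ.erase j, p x = ∏ x, p x :=
    Finset.mul_prod_erase _ _ (Finset.mem_univ j)
  calc (∏ x ∈ (Finset.univ.erase j).erase i, p x) * (p i * p j)
      = p j * (p i * ∏ x ∈ (Finset.univ.erase j).erase i, p x) := by ring
    _ = ∏ x, p x := by rw [h1, h2]

set_option maxHeartbeats 1000000 in
/-- for the Berwald–Moór metric of momenta (`n = N + 4`) and `p` in the
positive orthant: `a^i = K/(n p_i)`, `a^{ij} = (n/(n-1)) a^i a^j` for `i ≠ j`,
`a^{ii} = 0`, and the matrix `(a_{ij})` is the inverse of `(a^{ij})`. -/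
theorem stmt_16 (N : ℕ) (p : Fin (N + 4) → ℝ) (hp : ∀ i, 0 < p i) :
    (∀ i, aU1 N i p = Kfun N p / ((N + 4 : ℝ) * p i)) ∧
    (∀ i j, i ≠ j → aU2 N i j p = ((N + 4 : ℝ) / (N + 3)) * (aU1 N i p * aU1 N j p)) ∧
    (∀ i, aU2 N i i p = 0) ∧
    (∀ i j, ∑ s, aLowBM N p i s * aU2 N s j p = if i = j then (1 : ℝ) else 0) := by
  have hP : 0 < ∏ x, p x := Finset.prod_pos (fun x _ => hp x)
  have hKpos : 0 < Kfun N p := by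
    rw [Kfun, Afun_eq]; positivity
  have hK0 : Kfun N p ≠ 0 := hKpos.ne'
  have hn4 : (0:ℝ) < (N + 4 : ℝ) := by positivity
  have hn3 : (0:ℝ) < (N + 3 : ℝ) := by positivity
  have h4 : (N + 4 : ℝ) ≠ 0 := by positivity
  have h3 : (N + 3 : ℝ) ≠ 0 := by positivity
  have hKn : Kfun N p ^ (N + 4) = ∏ x, p x := by
    rw [Kfun, Afun_eq, ← Real.rpow_natCast ((∏ x, p x) ^ ((1 : ℝ) / (N + 4))) (N + 4),
      ← Real.rpow_mul hP.le,
      show (1 : ℝ) / (N + 4) * ((N + 4 : ℕ) : ℝ) = 1 by push_cast; field_simp,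
      Real.rpow_one]
  have hfac1 : ((N + 4).factorial : ℝ)⁻¹ * ((N + 3).factorial : ℝ) = ((N + 4 : ℝ))⁻¹ := by
    have : (N + 4).factorial = (N + 4) * (N + 3).factorial := rfl
    rw [this]
    have hf : ((N + 3).factorial : ℝ) ≠ 0 := Nat.cast_ne_zero.mpr (Nat.factorial_ne_zero _)
    push_cast
    field_simp
  have hfac2 : ((N + 4).factorial : ℝ)⁻¹ * ((N + 2).factorial : ℝ) =
      ((N + 4 : ℝ) * (N + 3))⁻¹ := by
    have : (N + 4).factorial = (N + 4) * ((N + 3) * (N + 2).factorial) := rfl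
    rw [this]
    have hf : ((N + 2).factorial : ℝ) ≠ 0 := Nat.cast_ne_zero.mpr (Nat.factorial_ne_zero _)
    push_cast
    field_simp
  have haU1 : ∀ i, aU1 N i p = Kfun N p / ((N + 4 : ℝ) * p i) := by
    intro i
    rw [aU1, num1_eq, prod_compl_singleton' p i (hp i).ne']
    rw [← mul_assoc, hfac1]
    rw [show ((N + 4 : ℝ))⁻¹ * ((∏ x, p x) / p i) = (∏ x, p x) / ((N + 4 : ℝ) * p i) by
      field_simp]
    rw [div_div, div_eq_div_iff (mul_pos (mul_pos hn4 (hp i)) (pow_pos hKpos _)).ne'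
      (mul_pos hn4 (hp i)).ne', ← hKn]
    ring
  have haU2 : ∀ i j, i ≠ j → aU2 N i j p =
      Kfun N p ^ 2 / ((N + 4 : ℝ) * (N + 3) * (p i * p j)) := by
    intro i j hij
    rw [aU2, num2_eq N i j hij, prod_compl_pair' p i j hij (hp i).ne' (hp j).ne']
    rw [← mul_assoc, hfac2]
    rw [show ((N + 4 : ℝ) * (N + 3))⁻¹ * ((∏ x, p x) / (p i * p j)) =
        (∏ x, p x) / ((N + 4 : ℝ) * (N + 3) * (p i * p j)) by
      field_simp]
    rw [div_div, div_eq_div_iff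
      (mul_pos (mul_pos (mul_pos hn4 hn3) (mul_pos (hp i) (hp j))) (pow_pos hKpos _)).ne'
      (mul_pos (mul_pos hn4 hn3) (mul_pos (hp i) (hp j))).ne', ← hKn]
    ring
  have haU2d : ∀ i, aU2 N i i p = 0 := by
    intro i
    rw [aU2, num2_diag, zero_div]
  refine ⟨haU1, ?_, haU2d, ?_⟩
  · intro i j hij
    rw [haU2 i j hij, haU1 i, haU1 j]
    field_simp [(hp i).ne', (hp j).ne']
  · intro i j
    by_cases hij : i = j
    · subst hij
      rw [if_pos rfl]
      have hterm : ∀ s, aLowBM N p i s * aU2 N s i p =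
          ((N + 3 : ℝ))⁻¹ - (if s = i then ((N + 3 : ℝ))⁻¹ else 0) := by
        intro s
        by_cases hs : s = i
        · subst hs
          rw [haU2d s, mul_zero, if_pos rfl, sub_self]
        · rw [if_neg hs, sub_zero, haU2 s i hs, aLowBM, if_neg (fun h => hs h.symm)]
          field_simp [(hp s).ne', (hp i).ne']
      rw [Finset.sum_congr rfl (fun s _ => hterm s), Finset.sum_sub_distrib,
        Finset.sum_const, Finset.sum_ite_eq' Finset.univ i (fun _ => ((N + 3 : ℝ))⁻¹),
        if_pos (Finset.mem_univ i), Finset.card_univ]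
      simp only [Fintype.card_fin, nsmul_eq_mul]
      push_cast
      field_simp
      ring
    · rw [if_neg hij]
      set c : ℝ := p i / ((N + 3 : ℝ) * p j) with hc
      have hterm : ∀ s, aLowBM N p i s * aU2 N s j p =
          c + (if s = i then -((N + 3 : ℝ)) * c else 0) + (if s = j then -c else 0) := by
        intro s
        by_cases hsj : s = j
        · subst hsj
          rw [haU2d s, mul_zero, if_neg (fun h : s = i => hij h.symm), if_pos rfl]
          ring
        · by_cases hsi : s = i
          · subst hsi
            rw [haU2 s j hsj, aLowBM, if_pos rfl, if_pos rfl, if_neg hsj, hc]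
            field_simp [(hp s).ne', (hp j).ne']
            ring
          · rw [haU2 s j hsj, aLowBM, if_neg (fun h => hsi h.symm), if_neg hsi, if_neg hsj, hc]
            field_simp [(hp s).ne', (hp i).ne', (hp j).ne']
            ring
      rw [Finset.sum_congr rfl (fun s _ => hterm s), Finset.sum_add_distrib,
        Finset.sum_add_distrib, Finset.sum_const,
        Finset.sum_ite_eq' Finset.univ i (fun _ => -((N + 3 : ℝ)) * c),
        Finset.sum_ite_eq' Finset.univ j (fun _ => -c),
        if_pos (Finset.mem_univ i), if_pos (Finset.mem_univ j), Finset.card_univ]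
      simp only [Fintype.card_fin, nsmul_eq_mul]
      push_cast
      ring

end
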